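/- (Multiclass Perceptron mistake bound) Let (x_1, y_1), ..., be a sequence of examples in ℝ^d × Fin Q with ‖x_i‖ ≤ 1, and suppose there exists W* = (w*_1,...,w*_Q) with Σ_q ‖w*_q‖² ≤ 1 and margin θ > 0: ⟨w*_{y_i} − w*_k, x_i⟩ ≥ θ for all k ≠ y_i. Then any ultraconservative additive multiclass algorithm (updating w_r ← w_r + τ_r x on a mistaken example with τ_y = 1, Σ_r τ_r = 0, τ_r ≤ 0 for r in the error set and τ_r = 0 otherwise) makes at most 2/θ² mistakes on the sequence. -/
import Mathlib


open scoped RealInnerProductSpace BigOperators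

theorem stmt4
    {d Q : ℕ} (T : ℕ) (θ : ℝ) (hθ : 0 < θ)
    (x : ℕ → EuclideanSpace ℝ (Fin d)) (y : ℕ → Fin Q)
    (hx : ∀ i, ‖x i‖ ≤ 1)
    (wstar : Fin Q → EuclideanSpace ℝ (Fin d))
    (hwstar : ∑ q : Fin Q, ‖wstar q‖ ^ 2 ≤ 1)
    (hmargin : ∀ i, i < T → ∀ k, k ≠ y i → ⟪wstar (y i) - wstar k, x i⟫ ≥ θ)
    (W : ℕ → Fin Q → EuclideanSpace ℝ (Fin d))
    (hW0 : ∀ r, W 0 r = 0)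
    (τ : ℕ → Fin Q → ℝ)
    -- each step i < T processes a mistaken example
    (hmistake : ∀ i, i < T → ∃ r, r ≠ y i ∧ ⟪W i r, x i⟫ ≥ ⟪W i (y i), x i⟫)
    -- ultraconservative update steps
    (hτy : ∀ i, i < T → τ i (y i) = 1)
    (hτsum : ∀ i, i < T → ∑ r : Fin Q, τ i r = 0)
    (hτE : ∀ i, i < T → ∀ r, r ≠ y i → ⟪W i r, x i⟫ ≥ ⟪W i (y i), x i⟫ → τ i r ≤ 0)
    (hτ0 : ∀ i, i < T → ∀ r, r ≠ y i → ¬ (⟪W i r, x i⟫ ≥ ⟪W i (y i), x i⟫) → τ i r = 0)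
    (hupd : ∀ i, i < T → ∀ r, W (i + 1) r = W i r + τ i r • x i) :
    (T : ℝ) ≤ 2 / θ ^ 2 := by
  rcases Nat.eq_zero_or_pos T with hT | hT
  · rw [hT]; norm_num; positivity
  set A : ℕ → ℝ := fun i => ∑ q : Fin Q, ⟪wstar q, W i q⟫ with hA
  set N : ℕ → ℝ := fun i => ∑ q : Fin Q, ‖W i q‖ ^ 2 with hN
  -- τ is nonpositive off the true label
  have hτle : ∀ i, i < T → ∀ r, r ≠ y i → τ i r ≤ 0 := by
    intro i hi r hr
    by_cases h : ⟪W i r, x i⟫ ≥ ⟪W i (y i), x i⟫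
    · exact hτE i hi r hr h
    · exact le_of_eq (hτ0 i hi r hr h)
  have hτerase : ∀ i, i < T → ∑ r ∈ Finset.univ.erase (y i), τ i r = -1 := by
    intro i hi
    have h := hτsum i hi
    rw [← Finset.add_sum_erase _ _ (Finset.mem_univ (y i)), hτy i hi] at h
    linarith
  -- Progress of the correlation with wstar
  have hAstep : ∀ i, i < T → A i + θ ≤ A (i + 1) := by
    intro i hi
    have hexp : A (i + 1) = A i + ∑ q : Fin Q, τ i q * ⟪wstar q, x i⟫ := by
      simp only [hA]
      rw [← Finset.sum_add_distrib]
      refine Finset.sum_congr rfl fun q _ => ?_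
      rw [hupd i hi q, inner_add_right, real_inner_smul_right]
    have hsum0 : ∑ q : Fin Q, τ i q * (⟪wstar q, x i⟫ - ⟪wstar (y i), x i⟫)
        = ∑ q : Fin Q, τ i q * ⟪wstar q, x i⟫ := by
      simp only [mul_sub, Finset.sum_sub_distrib, ← Finset.sum_mul, hτsum i hi,
        zero_mul, sub_zero]
    have h1 : ∀ q ∈ Finset.univ.erase (y i),
        -θ * τ i q ≤ τ i q * (⟪wstar q, x i⟫ - ⟪wstar (y i), x i⟫) := by
      intro q hq
      have hqy : q ≠ y i := Finset.ne_of_mem_erase hq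
      have hm := hmargin i hi q hqy
      rw [inner_sub_left] at hm
      have hτq := hτle i hi q hqy
      nlinarith
    have h2 : ∑ q ∈ Finset.univ.erase (y i), (-θ * τ i q) = θ := by
      rw [← Finset.mul_sum, hτerase i hi]; ring
    have key : θ ≤ ∑ q : Fin Q, τ i q * (⟪wstar q, x i⟫ - ⟪wstar (y i), x i⟫) := by
      have h3 := Finset.sum_le_sum h1
      rw [h2] at h3
      have h4 := Finset.add_sum_erase Finset.univ
        (fun q => τ i q * (⟪wstar q, x i⟫ - ⟪wstar (y i), x i⟫)) (Finset.mem_univ (y i))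
      simp only [sub_self, mul_zero, zero_add] at h4
      rw [← h4]; exact h3
    rw [hexp, ← hsum0]
    linarith
  -- Growth of the squared norms
  have hNstep : ∀ i, i < T → N (i + 1) ≤ N i + 2 := by
    intro i hi
    have hterm : ∀ q : Fin Q, ‖W (i + 1) q‖ ^ 2
        = ‖W i q‖ ^ 2 + 2 * (τ i q * ⟪W i q, x i⟫) + (τ i q) ^ 2 * ‖x i‖ ^ 2 := by
      intro q
      rw [hupd i hi q, norm_add_sq_real, real_inner_smul_right, norm_smul]
      rw [mul_pow]
      simp [Real.norm_eq_abs, sq_abs]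
    have hexp : N (i + 1) = N i + 2 * (∑ q : Fin Q, τ i q * ⟪W i q, x i⟫)
        + (∑ q : Fin Q, (τ i q) ^ 2) * ‖x i‖ ^ 2 := by
      simp only [hN, hterm, Finset.sum_add_distrib, Finset.mul_sum, Finset.sum_mul]
    have hsum0 : ∑ q : Fin Q, τ i q * (⟪W i q, x i⟫ - ⟪W i (y i), x i⟫)
        = ∑ q : Fin Q, τ i q * ⟪W i q, x i⟫ := by
      simp only [mul_sub, Finset.sum_sub_distrib, ← Finset.sum_mul, hτsum i hi,
        zero_mul, sub_zero]
    have h1 : ∑ q : Fin Q, τ i q * ⟪W i q, x i⟫ ≤ 0 := by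
      rw [← hsum0]
      refine Finset.sum_nonpos fun q _ => ?_
      by_cases hqy : q = y i
      · rw [hqy, sub_self, mul_zero]
      · by_cases h : ⟪W i q, x i⟫ ≥ ⟪W i (y i), x i⟫
        · have hτq := hτE i hi q hqy h
          nlinarith
        · rw [hτ0 i hi q hqy h, zero_mul]
    have hb : ∀ q ∈ Finset.univ.erase (y i), -τ i q ≤ 1 := by
      intro q hq
      have h := Finset.single_le_sum (f := fun r => -τ i r)
        (fun r hr => by
          have hle := hτle i hi r (Finset.ne_of_mem_erase hr)
          show (0:ℝ) ≤ -τ i r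
          linarith) hq
      simp only [Finset.sum_neg_distrib, hτerase i hi] at h
      linarith
    have h2 : ∑ q : Fin Q, (τ i q) ^ 2 ≤ 2 := by
      rw [← Finset.add_sum_erase _ _ (Finset.mem_univ (y i)), hτy i hi]
      have hsq : ∑ q ∈ Finset.univ.erase (y i), (τ i q) ^ 2
          ≤ ∑ q ∈ Finset.univ.erase (y i), (-τ i q) := by
        refine Finset.sum_le_sum fun q hq => ?_
        have h1' := hτle i hi q (Finset.ne_of_mem_erase hq)
        have h2' := hb q hq
        nlinarith
      have hsum' : ∑ q ∈ Finset.univ.erase (y i), (-τ i q) = 1 := by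
        rw [Finset.sum_neg_distrib, hτerase i hi]; ring
      rw [hsum'] at hsq
      have hone : (1:ℝ) ^ 2 = 1 := one_pow 2
      linarith
    have hτ2nonneg : (0:ℝ) ≤ ∑ q : Fin Q, (τ i q) ^ 2 :=
      Finset.sum_nonneg fun q _ => sq_nonneg _
    have hxsq : ‖x i‖ ^ 2 ≤ 1 := by nlinarith [hx i, norm_nonneg (x i)]
    have hxsq0 : (0:ℝ) ≤ ‖x i‖ ^ 2 := sq_nonneg _
    rw [hexp]
    nlinarith
  -- Iterate the two bounds
  have hAT : ∀ n, n ≤ T → θ * n ≤ A n := by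
    intro n hn
    induction n with
    | zero => simp [hA, hW0]
    | succ k ih =>
      have hk : k < T := hn
      have h1 := hAstep k hk
      have h2 := ih (le_of_lt hk)
      push_cast
      linarith
  have hNT : ∀ n, n ≤ T → N n ≤ 2 * n := by
    intro n hn
    induction n with
    | zero => simp [hN, hW0]
    | succ k ih =>
      have hk : k < T := hn
      have h1 := hNstep k hk
      have h2 := ih (le_of_lt hk)
      push_cast
      linarith
  have hA' := hAT T le_rfl
  have hN' := hNT T le_rfl
  -- Cauchy–Schwarz
  have hAB : A T ≤ ∑ q : Fin Q, ‖wstar q‖ * ‖W T q‖ :=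
    Finset.sum_le_sum fun q _ => real_inner_le_norm _ _
  have hB2 : (∑ q : Fin Q, ‖wstar q‖ * ‖W T q‖) ^ 2
      ≤ (∑ q : Fin Q, ‖wstar q‖ ^ 2) * ∑ q : Fin Q, ‖W T q‖ ^ 2 :=
    Finset.sum_mul_sq_le_sq_mul_sq _ _ _
  have hNnonneg : (0:ℝ) ≤ ∑ q : Fin Q, ‖W T q‖ ^ 2 :=
    Finset.sum_nonneg fun q _ => sq_nonneg _
  have hT1 : (1:ℝ) ≤ (T:ℝ) := by exact_mod_cast hT
  have hkey : θ ^ 2 * (T:ℝ) ^ 2 ≤ 2 * (T:ℝ) := by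
    have hθT : 0 ≤ θ * (T:ℝ) := by positivity
    calc θ ^ 2 * (T:ℝ) ^ 2 = (θ * T) ^ 2 := by ring
      _ ≤ (∑ q : Fin Q, ‖wstar q‖ * ‖W T q‖) ^ 2 := by
          apply pow_le_pow_left₀ hθT; linarith
      _ ≤ (∑ q : Fin Q, ‖wstar q‖ ^ 2) * ∑ q : Fin Q, ‖W T q‖ ^ 2 := hB2
      _ ≤ 1 * ∑ q : Fin Q, ‖W T q‖ ^ 2 := by
          apply mul_le_mul_of_nonneg_right hwstar hNnonneg
      _ ≤ 2 * T := by rw [one_mul]; exact hN'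
  rw [le_div_iff₀ (by positivity)]
  nlinarith
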